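/- Let d > 0, K > 0, Δ(r,c) = d(e^r + e^{-r} - 2) - c·r + K, and let (r*, c*) satisfy Δ(r*,c*) = 0 and d(e^{r*} - e^{-r*}) = c*. Then for every c > c*, the equation Δ(r,c) = 0 has exactly two positive real roots r₁ < r₂, and they satisfy r₁ < r* < r₂. -/

import Mathlib

open Real Set

/-- exp(-x) is strictly convex. -/
lemma sc_exp_neg : StrictConvexOn ℝ Set.univ (fun r : ℝ => Real.exp (-r)) := by
  refine ⟨convex_univ, ?_⟩
  intro x _ y _ hxy a b ha hb hab
  have h := strictConvexOn_exp.2 (mem_univ (-x)) (mem_univ (-y))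
      (by simpa using (neg_injective.ne_iff).2 hxy) ha hb hab
  simp only [smul_eq_mul, mul_neg] at h ⊢
  have : -(a * x) + -(b * y) = -(a * x + b * y) := by ring
  rw [this] at h
  exact h

/-- The full dispersion function is strictly convex. -/
lemma sc_full (d K c : ℝ) (hd : 0 < d) :
    StrictConvexOn ℝ Set.univ
      (fun r : ℝ => d * (Real.exp r + Real.exp (-r) - 2) - c * r + K) := by
  refine ⟨convex_univ, ?_⟩
  intro x _ y _ hxy a b ha hb hab
  have e1 := strictConvexOn_exp.2 (mem_univ x) (mem_univ y) hxy ha hb hab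
  have e2 := sc_exp_neg.2 (mem_univ x) (mem_univ y) hxy ha hb hab
  simp only [smul_eq_mul] at e1 e2 ⊢
  have E1 := mul_lt_mul_of_pos_left e1 hd
  have E2 := mul_lt_mul_of_pos_left e2 hd
  have h3 : a * K + b * K = K := by rw [← add_mul, hab, one_mul]
  have h4 : a * (2 * d) + b * (2 * d) = 2 * d := by rw [← add_mul, hab, one_mul]
  nlinarith [E1, E2, h3, h4]

/-- Three collinear points: strict convexity forces the middle value below 0. -/
lemma mid_neg {f : ℝ → ℝ} (hf : StrictConvexOn ℝ Set.univ f) {a b c : ℝ}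
    (hab : a < b) (hbc : b < c) (hfa : f a = 0) (hfc : f c = 0) : f b < 0 := by
  have hac : a < c := hab.trans hbc
  have hca : (0:ℝ) < c - a := by linarith
  have ht0 : 0 < (c - b) / (c - a) := div_pos (by linarith) hca
  have hs0 : 0 < (b - a) / (c - a) := div_pos (by linarith) hca
  have hts : (c - b) / (c - a) + (b - a) / (c - a) = 1 := by field_simp; ring
  have hcomb : ((c - b) / (c - a)) * a + ((b - a) / (c - a)) * c = b := by
    field_simp; ring
  have h := hf.2 (mem_univ a) (mem_univ c) (ne_of_lt hac) ht0 hs0 hts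
  rw [smul_eq_mul, smul_eq_mul, hcomb, hfa, hfc] at h
  simpa using h

theorem stmt_5 (d K cstar rstar : ℝ) (hd : 0 < d) (hK : 0 < K)
    (hcs : 0 < cstar) (hrs : 0 < rstar)
    (hcrit : d * (Real.exp rstar + Real.exp (-rstar) - 2) - cstar * rstar + K = 0)
    (hder : d * (Real.exp rstar - Real.exp (-rstar)) = cstar) :
    ∀ c : ℝ, cstar < c →
      ∃ r₁ r₂ : ℝ, 0 < r₁ ∧ r₁ < rstar ∧ rstar < r₂ ∧
        d * (Real.exp r₁ + Real.exp (-r₁) - 2) - c * r₁ + K = 0 ∧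
        d * (Real.exp r₂ + Real.exp (-r₂) - 2) - c * r₂ + K = 0 ∧
        ∀ r : ℝ, 0 < r → d * (Real.exp r + Real.exp (-r) - 2) - c * r + K = 0 →
          r = r₁ ∨ r = r₂ := by
  intro c hc
  set f : ℝ → ℝ := fun r => d * (Real.exp r + Real.exp (-r) - 2) - c * r + K with hf
  have hcont : Continuous f := by fun_prop
  have hf0 : f 0 = K := by norm_num [hf]
  have hfrs : f rstar < 0 := by
    have heq : f rstar = (d * (Real.exp rstar + Real.exp (-rstar) - 2) - cstar * rstar + K)
        + (cstar - c) * rstar := by simp only [hf]; ring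
    rw [heq, hcrit]
    nlinarith
  -- root on (0, rstar)
  have h1 : (0:ℝ) ∈ Ioo (f rstar) (f 0) := ⟨hfrs, by rw [hf0]; exact hK⟩
  obtain ⟨r₁, hr₁mem, hr₁⟩ := intermediate_value_Ioo' hrs.le hcont.continuousOn h1
  -- big R with f R > 0
  set R : ℝ := max (rstar + 1) (max 2 (4 * c / d)) with hR
  have hR1 : rstar + 1 ≤ R := le_max_left _ _
  have hR2 : (2:ℝ) ≤ R := le_trans (le_max_left _ _) (le_max_right _ _)
  have hR3 : 4 * c / d ≤ R := le_trans (le_max_right _ _) (le_max_right _ _)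
  have hR3' : 4 * c ≤ d * R := by
    have := (div_le_iff₀ hd).1 hR3; linarith
  have hexp : (1 + R / 2) ^ 2 ≤ Real.exp R := by
    have h1 : 1 + R / 2 ≤ Real.exp (R / 2) := by
      have := Real.add_one_le_exp (R / 2); linarith
    have hsq : Real.exp (R / 2) ^ 2 = Real.exp R := by
      rw [sq, ← Real.exp_add]; ring_nf
    nlinarith [h1, hsq, show (0:ℝ) ≤ 1 + R / 2 by linarith]
  have hfR : 0 < f R := by
    have hpos : 0 < Real.exp (-R) := Real.exp_pos _
    have heq : f R = d * (Real.exp R + Real.exp (-R) - 2) - c * R + K := rfl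
    rw [heq]
    nlinarith [hexp, hpos, hK, hd]
  have h2 : (0:ℝ) ∈ Ioo (f rstar) (f R) := ⟨hfrs, hfR⟩
  have hrsR : rstar ≤ R := by linarith
  obtain ⟨r₂, hr₂mem, hr₂⟩ := intermediate_value_Ioo hrsR hcont.continuousOn h2
  have hsc : StrictConvexOn ℝ Set.univ f := sc_full d K c hd
  refine ⟨r₁, r₂, hr₁mem.1, hr₁mem.2, hr₂mem.1, hr₁, hr₂, ?_⟩
  intro r hr hroot
  have hroot' : f r = 0 := hroot
  by_contra hne
  push_neg at hne
  obtain ⟨hne1, hne2⟩ := hne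
  have hr12 : r₁ < r₂ := lt_trans hr₁mem.2 hr₂mem.1
  rcases lt_trichotomy r r₁ with h | h | h
  · exact absurd (mid_neg hsc h hr12 hroot' hr₂) (by rw [hr₁]; simp)
  · exact hne1 h
  · rcases lt_trichotomy r r₂ with h' | h' | h'
    · exact absurd (mid_neg hsc h h' hr₁ hr₂) (by rw [hroot']; simp)
    · exact hne2 h'
    · exact absurd (mid_neg hsc hr12 h' hr₁ hroot') (by rw [hr₂]; simp)
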